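/- For the root system A_l = {ε_i - ε_j : 1 ≤ i ≠ j ≤ l+1} in ℝ^{l+1}, there exists a choice of one root from each antipodal pair {α, -α} whose sum is the zero vector if and only if l is even. -/

import Mathlib

/-- The root system `A_l` in `ℝ^{l+1}`: vectors `ε_i - ε_j` for `i ≠ j`. -/
def rootsA (l : ℕ) : Set (Fin (l + 1) → ℝ) :=
  {v | ∃ i j : Fin (l + 1), i ≠ j ∧ v = Pi.single i 1 - Pi.single j 1}

def ee {n : ℕ} (i j : Fin n) : Fin n → ℝ := Pi.single i 1 - Pi.single j 1

lemma ee_apply {n : ℕ} (i j k : Fin n) :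
    ee i j k = (if k = i then (1:ℝ) else 0) - (if k = j then 1 else 0) := by
  simp [ee, Pi.single_apply]

lemma neg_ee {n : ℕ} (i j : Fin n) : -ee i j = ee j i := by
  simp [ee, neg_sub]

lemma ee_inj {n : ℕ} {i j k m : Fin n} (hij : i ≠ j)
    (h : ee i j = ee k m) : i = k ∧ j = m := by
  have h1 := congrFun h i
  have h2 := congrFun h j
  rw [ee_apply, ee_apply, if_pos rfl, if_neg hij] at h1
  rw [ee_apply, ee_apply, if_pos rfl, if_neg (Ne.symm hij)] at h2
  constructor
  · by_contra hik
    rw [if_neg hik] at h1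
    split_ifs at h1 <;> norm_num at h1
  · by_contra hjm
    rw [if_neg hjm] at h2
    split_ifs at h2 <;> norm_num at h2

open Fin.NatCast Fin.CommRing in
lemma forward (l m : ℕ) (hm : l = 2*m) :
    ∃ S : Finset (Fin (l + 1) → ℝ),
      (∀ v ∈ S, v ∈ rootsA l) ∧
      (∀ v ∈ rootsA l, (v ∈ S ↔ -v ∉ S)) ∧
      ∑ v ∈ S, v = 0 := by
  classical
  set n := l + 1 with hn
  have hval : ∀ d, d ∈ Finset.Icc 1 m → ((d : Fin n)).val = d := by
    intro d hd
    simp only [Finset.mem_Icc] at hd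
    exact Fin.val_cast_of_lt (by omega)
  have hne : ∀ d, d ∈ Finset.Icc 1 m → ∀ i : Fin n, i ≠ i + (d : Fin n) := by
    intro d hd i hcon
    have h0 : (d : Fin n) = 0 := by
      have := hcon.symm
      rwa [add_eq_left] at this
    have := hval d hd
    rw [h0] at this
    simp only [Fin.val_zero] at this
    simp only [Finset.mem_Icc] at hd
    omega
  set S : Finset (Fin n → ℝ) := ((Finset.Icc 1 m) ×ˢ (Finset.univ : Finset (Fin n))).image
      (fun p : ℕ × Fin n => ee p.2 (p.2 + (p.1 : Fin n))) with hS
  have memS : ∀ i j : Fin n, i ≠ j → (ee i j ∈ S ↔ (j - i).val ∈ Finset.Icc 1 m) := by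
    intro i j hij
    constructor
    · intro hv
      simp only [hS, Finset.mem_image, Finset.mem_product] at hv
      obtain ⟨⟨d, i'⟩, ⟨hd, -⟩, heq⟩ := hv
      obtain ⟨rfl, hj⟩ := ee_inj (hne d hd i') heq
      have hdd : (d : Fin n) = j - i' := by rw [← hj, add_sub_cancel_left]
      rw [← hdd, hval d hd]
      exact hd
    · intro hd
      simp only [hS, Finset.mem_image, Finset.mem_product]
      refine ⟨⟨(j - i).val, i⟩, ⟨hd, Finset.mem_univ i⟩, ?_⟩
      simp only [Fin.cast_val_eq_self]
      rw [add_sub_cancel]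
  refine ⟨S, ?_, ?_, ?_⟩
  · rintro v hv
    simp only [hS, Finset.mem_image, Finset.mem_product] at hv
    obtain ⟨⟨d, i⟩, ⟨hd, -⟩, rfl⟩ := hv
    exact ⟨i, i + d, hne d hd i, rfl⟩
  · rintro v ⟨i, j, hij, rfl⟩
    rw [show (Pi.single i 1 - Pi.single j 1 : Fin n → ℝ) = ee i j from rfl,
      neg_ee, memS i j hij, memS j i (Ne.symm hij)]
    have hji : (j - i) ≠ 0 := sub_ne_zero.mpr (Ne.symm hij)
    have hij' : (i - j) = -(j - i) := by ring
    have h1 : 1 ≤ (j - i).val := Nat.one_le_iff_ne_zero.mpr (by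
      intro h0; exact hji (Fin.ext (by simp [h0])))
    have h2 : (j - i).val < n := (j - i).isLt
    have hvneg : (i - j).val = n - (j - i).val := by
      rw [hij', Fin.coe_neg, Nat.mod_eq_of_lt (by omega)]
    rw [hvneg]
    simp only [Finset.mem_Icc]
    omega
  · rw [hS, Finset.sum_image, Finset.sum_product]
    · have : ∀ d ∈ Finset.Icc 1 m,
          ∑ i : Fin n, ee i (i + (d : Fin n)) = 0 := by
        intro d _
        have hre : ∑ i : Fin n, Pi.single (i + (d:Fin n)) (1:ℝ) = ∑ i : Fin n, Pi.single i (1:ℝ) :=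
          Fintype.sum_equiv (Equiv.addRight (d:Fin n)) _ _ (fun i => by simp)
        simp only [ee]
        rw [Finset.sum_sub_distrib, hre, sub_self]
      exact Finset.sum_congr rfl this ▸ Finset.sum_const_zero
    · rintro ⟨d, i⟩ hdi ⟨d', i'⟩ hdi' heq
      simp only [Finset.mem_coe, Finset.mem_product] at hdi hdi'
      obtain ⟨rfl, hadd⟩ := ee_inj (hne d hdi.1 i) heq
      have : ((d : Fin n)) = (d' : Fin n) := by
        have := hadd
        rwa [add_right_inj] at this
      have := congrArg Fin.val this
      rw [hval d hdi.1, hval d' hdi'.1] at this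
      simp [this]

lemma backward (l : ℕ) (hl : 1 ≤ l) (S : Finset (Fin (l + 1) → ℝ))
    (hroots : ∀ v ∈ S, v ∈ rootsA l)
    (hhalf : ∀ v ∈ rootsA l, (v ∈ S ↔ -v ∉ S))
    (hzero : ∑ v ∈ S, v = 0) : Even l := by
  classical
  set A : Finset (Fin (l+1)) := Finset.univ.filter (fun j => j ≠ 0 ∧ ee 0 j ∈ S) with hA
  set B : Finset (Fin (l+1)) := Finset.univ.filter (fun j => j ≠ 0 ∧ ee j 0 ∈ S) with hB
  have hroot0j : ∀ j : Fin (l+1), j ≠ 0 → ee 0 j ∈ rootsA l :=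
    fun j hj => ⟨0, j, Ne.symm hj, rfl⟩
  have hdisj : Disjoint A B := by
    rw [Finset.disjoint_left]
    intro j hjA hjB
    simp only [hA, hB, Finset.mem_filter] at hjA hjB
    have := (hhalf _ (hroot0j j hjA.2.1)).mp hjA.2.2
    rw [neg_ee] at this
    exact this hjB.2.2
  have hunion : A ∪ B = Finset.univ.erase 0 := by
    ext j
    simp only [hA, hB, Finset.mem_union, Finset.mem_filter, Finset.mem_univ, true_and,
      Finset.mem_erase, and_true]
    constructor
    · rintro (⟨h, -⟩ | ⟨h, -⟩) <;> exact h
    · intro hj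
      by_cases hS : ee 0 j ∈ S
      · exact Or.inl ⟨hj, hS⟩
      · refine Or.inr ⟨hj, ?_⟩
        have hiff := hhalf _ (hroot0j j hj)
        rw [neg_ee] at hiff
        by_contra hc
        exact hS (hiff.mpr hc)
  have hcardAB : A.card + B.card = l := by
    have h1 := Finset.card_union_of_disjoint hdisj
    rw [hunion, Finset.card_erase_of_mem (Finset.mem_univ 0), Finset.card_univ,
      Fintype.card_fin] at h1
    omega
  have hsum0 : ∑ v ∈ S, v 0 = 0 := by
    rw [← Finset.sum_apply (a := (0 : Fin (l+1))) (g := fun v : Fin (l+1) → ℝ => v), hzero]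
    rfl
  set S₁ := S.filter (fun v => v 0 = 1) with hS₁
  set S₂ := S.filter (fun v => v 0 = -1) with hS₂
  have hS₁A : S₁ = A.image (fun j => ee 0 j) := by
    ext v
    simp only [hS₁, hA, Finset.mem_filter, Finset.mem_image, Finset.mem_univ, true_and]
    constructor
    · rintro ⟨hvS, h1⟩
      obtain ⟨i, j, hij, rfl⟩ := hroots v hvS
      rw [show (Pi.single i 1 - Pi.single j 1 : Fin (l+1) → ℝ) = ee i j from rfl] at *
      have hi : (0 : Fin (l+1)) = i := by
        by_contra hi
        rw [ee_apply, if_neg hi] at h1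
        split_ifs at h1 <;> norm_num at h1
      subst hi
      exact ⟨j, ⟨Ne.symm hij, hvS⟩, rfl⟩
    · rintro ⟨j, ⟨hj0, hjS⟩, rfl⟩
      refine ⟨hjS, ?_⟩
      rw [ee_apply, if_pos rfl, if_neg (show ¬(0:Fin (l+1)) = j from fun h => hj0 h.symm)]
      norm_num
  have hS₂B : S₂ = B.image (fun j => ee j 0) := by
    ext v
    simp only [hS₂, hB, Finset.mem_filter, Finset.mem_image, Finset.mem_univ, true_and]
    constructor
    · rintro ⟨hvS, h1⟩
      obtain ⟨i, j, hij, rfl⟩ := hroots v hvS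
      rw [show (Pi.single i 1 - Pi.single j 1 : Fin (l+1) → ℝ) = ee i j from rfl] at *
      have hj : (0 : Fin (l+1)) = j := by
        by_contra hj
        rw [ee_apply, if_neg (show ¬(0:Fin (l+1)) = j from hj)] at h1
        split_ifs at h1 <;> norm_num at h1
      subst hj
      exact ⟨i, ⟨hij, hvS⟩, rfl⟩
    · rintro ⟨j, ⟨hj0, hjS⟩, rfl⟩
      refine ⟨hjS, ?_⟩
      rw [ee_apply, if_neg (show ¬(0:Fin (l+1)) = j from fun h => hj0 h.symm), if_pos rfl]
      norm_num
  have hcard₁ : S₁.card = A.card := by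
    rw [hS₁A]
    apply Finset.card_image_of_injOn
    intro j hj j' hj' heq
    simp only [Finset.coe_filter, Set.mem_setOf_eq, hA] at hj hj'
    exact (ee_inj (fun h => hj.2.1 h.symm) heq).2
  have hcard₂ : S₂.card = B.card := by
    rw [hS₂B]
    apply Finset.card_image_of_injOn
    intro j hj j' hj' heq
    simp only [Finset.coe_filter, Set.mem_setOf_eq, hB] at hj hj'
    exact (ee_inj hj.2.1 heq).1
  have hkey : ∑ v ∈ S, v 0 = (S₁.card : ℝ) - (S₂.card : ℝ) := by
    have hc : ∀ v ∈ S, v 0 = 1 ∨ v 0 = -1 ∨ v 0 = 0 := by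
      intro v hv
      obtain ⟨i, j, hij, rfl⟩ := hroots v hv
      rw [show (Pi.single i 1 - Pi.single j 1 : Fin (l+1) → ℝ) = ee i j from rfl, ee_apply]
      split_ifs <;> norm_num
    rw [← Finset.sum_filter_add_sum_filter_not S (fun v => v 0 = 1)]
    have e1 : ∑ v ∈ S.filter (fun v => v 0 = 1), v 0 = (S₁.card : ℝ) := by
      rw [Finset.sum_congr rfl (fun v hv => (Finset.mem_filter.mp hv).2),
        Finset.sum_const, nsmul_eq_mul, mul_one, hS₁]
    have hff : (S.filter (fun v => ¬ v 0 = 1)).filter (fun v => v 0 = -1) = S₂ := by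
      ext v
      simp only [Finset.mem_filter, hS₂]
      constructor
      · rintro ⟨⟨h1, -⟩, h2⟩; exact ⟨h1, h2⟩
      · rintro ⟨h1, h2⟩; exact ⟨⟨h1, by rw [h2]; norm_num⟩, h2⟩
    have e2 : ∑ v ∈ S.filter (fun v => ¬ v 0 = 1), v 0 = -(S₂.card : ℝ) := by
      rw [← Finset.sum_filter_add_sum_filter_not (S.filter (fun v => ¬ v 0 = 1))
        (fun v => v 0 = -1), hff]
      have e3 : ∑ v ∈ S₂, v 0 = -(S₂.card : ℝ) := by
        rw [Finset.sum_congr rfl (fun v hv => (Finset.mem_filter.mp hv).2),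
          Finset.sum_const, nsmul_eq_mul, mul_neg, mul_one]
      have e4 : ∑ v ∈ (S.filter (fun v => ¬ v 0 = 1)).filter (fun v => ¬ v 0 = -1), v 0 = 0 := by
        apply Finset.sum_eq_zero
        intro v hv
        simp only [Finset.mem_filter] at hv
        rcases hc v hv.1.1 with h | h | h
        · exact absurd h hv.1.2
        · exact absurd h hv.2
        · exact h
      rw [e3, e4, add_zero]
    rw [e1, e2]
    ring
  have hAB : A.card = B.card := by
    rw [hkey, hcard₁, hcard₂] at hsum0
    have := sub_eq_zero.mp hsum0
    exact_mod_cast this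
  exact ⟨A.card, by omega⟩

/-- There exists a half of `A_l` (one root from each antipodal pair) summing to
zero iff `l` is even. -/
theorem stmt_0 (l : ℕ) (hl : 1 ≤ l) :
    (∃ S : Finset (Fin (l + 1) → ℝ),
      (∀ v ∈ S, v ∈ rootsA l) ∧
      (∀ v ∈ rootsA l, (v ∈ S ↔ -v ∉ S)) ∧
      ∑ v ∈ S, v = 0) ↔ Even l := by
  constructor
  · rintro ⟨S, h1, h2, h3⟩
    exact backward l hl S h1 h2 h3
  · rintro ⟨m, hm⟩
    exact forward l m (by omega)
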